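/- arXiv:2407.05882 — 2 statements merged into one kernel-verified Lean document; each statement's English description precedes it below -/
import Mathlib

section
/- Let {u_k}_{k∈ℕ} be a sequence of functions on B₁ ⊂ ℝⁿ, each twice weakly differentiable with Hessian D²u_k ∈ L²(B₁), such that ‖D²u_k‖_{L²(B₁)} ≤ C₀ for all k for some constant C₀, and such that sup_{k} sup_{0<r<1} ⨍_{B_r} |D²u_k − (D²u_k)̄_{B_r}|² = +∞. Then for every 0 < δ < 1 there exist a sequence of radii r_m → 0 with 0 < r_m < 1 and indices k_m ∈ ℕ such that for all m, all k ∈ ℕ and all ρ with r_m ≤ ρ < 1: (1−δ) ⨍_{B_ρ} |D²u_k − (D²u_k)̄_{B_ρ}|² ≤ ⨍_{B_{r_m}} |D²u_{k_m} − (D²u_{k_m})̄_{B_{r_m}}|². -/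
open MeasureTheory Metric ENNReal Filter

/-- For a matrix-valued function `w` (playing the role of a Hessian `D²u`), the average
over `B_r` of the squared Frobenius distance to its average, i.e.
`⨍_{B_r} |w − w̄_{B_r}|²`, valued in `[0,∞]`. -/
noncomputable def meanOsc2 {n : ℕ}
    (w : EuclideanSpace ℝ (Fin n) → Fin n → Fin n → ℝ) (r : ℝ) : ℝ≥0∞ :=
  (∫⁻ y in ball (0 : EuclideanSpace ℝ (Fin n)) r,
      ENNReal.ofReal (∑ i, ∑ j,
        (w y i j - ⨍ z in ball (0 : EuclideanSpace ℝ (Fin n)) r, w z i j) ^ 2)) /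
    volume (ball (0 : EuclideanSpace ℝ (Fin n)) r)

lemma variance_aux {α : Type*} [MeasurableSpace α] (μ : Measure α) [IsFiniteMeasure μ]
    (f : α → ℝ) (hf : Integrable f μ) (hf2 : Integrable (fun x => f x ^ 2) μ) :
    ∫ x, (f x - ⨍ y, f y ∂μ) ^ 2 ∂μ ≤ ∫ x, f x ^ 2 ∂μ := by
  set a := ⨍ y, f y ∂μ with ha
  set M := (μ Set.univ).toReal with hM
  have hMnn : 0 ≤ M := ENNReal.toReal_nonneg
  have hint : ∫ x, f x ∂μ = a * M := by
    rcases eq_or_ne (μ Set.univ) 0 with h0 | h0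
    · have hz : μ = 0 := Measure.measure_univ_eq_zero.mp h0
      simp [ha, hz, average]
    · have hM0 : M ≠ 0 := by
        rw [hM]
        exact ENNReal.toReal_ne_zero.mpr ⟨h0, measure_ne_top μ _⟩
      rw [ha, average_eq, smul_eq_mul, measureReal_def, ← hM]
      field_simp
  have h1 : Integrable (fun x => 2 * a * f x) μ := hf.const_mul _
  have h2 : Integrable (fun _ : α => a ^ 2) μ := integrable_const _
  have expand : (fun x => (f x - a) ^ 2) = fun x => (f x ^ 2 - 2 * a * f x) + a ^ 2 := by
    funext x; ring
  have h3 : Integrable (fun x => f x ^ 2 - 2 * a * f x) μ := hf2.sub h1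
  have key : ∫ x, (f x - a) ^ 2 ∂μ
      = ∫ x, f x ^ 2 ∂μ - 2 * a * (a * M) + M * a ^ 2 := by
    rw [expand, integral_add h3 h2, integral_sub hf2 h1, integral_const_mul _ _,
      integral_const, measureReal_def, hint, ← hM, smul_eq_mul]
  rw [key]
  nlinarith [sq_nonneg a, hMnn]

lemma oscBound {n : ℕ} (C₀ : ℝ) (w : EuclideanSpace ℝ (Fin n) → Fin n → Fin n → ℝ)
    (hmeas : ∀ i j, Measurable (fun y => w y i j))
    (hL2 : ∫⁻ y in ball (0 : EuclideanSpace ℝ (Fin n)) 1,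
        ENNReal.ofReal (∑ i, ∑ j, (w y i j) ^ 2) ≤ ENNReal.ofReal (C₀ ^ 2))
    (r : ℝ) (hr : 0 < r) (hr1 : r ≤ 1) :
    meanOsc2 w r ≤ ENNReal.ofReal (C₀ ^ 2) / volume (ball (0 : EuclideanSpace ℝ (Fin n)) r) := by
  set B : Set (EuclideanSpace ℝ (Fin n)) := ball 0 r with hB
  set μ : Measure (EuclideanSpace ℝ (Fin n)) := volume.restrict B with hμ
  haveI : IsFiniteMeasure μ := by
    constructor
    rw [hμ, Measure.restrict_apply_univ]
    exact measure_ball_lt_top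
  set f : EuclideanSpace ℝ (Fin n) → ℝ := fun y => ∑ i, ∑ j, (w y i j) ^ 2 with hf
  have hfmeas : Measurable f := by
    apply Finset.measurable_sum
    intro i _
    apply Finset.measurable_sum
    intro j _
    exact (hmeas i j).pow_const 2
  have hfnn : ∀ y, 0 ≤ f y := fun y =>
    Finset.sum_nonneg fun i _ => Finset.sum_nonneg fun j _ => sq_nonneg _
  -- lintegral of f over B r is at most over B 1
  have hsub : ∫⁻ y in B, ENNReal.ofReal (f y)
      ≤ ∫⁻ y in ball (0 : EuclideanSpace ℝ (Fin n)) 1, ENNReal.ofReal (f y) :=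
    lintegral_mono' (Measure.restrict_mono (ball_subset_ball hr1) le_rfl) le_rfl
  have hflin : ∫⁻ y, ENNReal.ofReal (f y) ∂μ ≤ ENNReal.ofReal (C₀ ^ 2) :=
    le_trans hsub (le_trans (le_of_eq rfl) hL2)
  -- Integrability of f
  have hIf : Integrable f μ := by
    refine ⟨hfmeas.aestronglyMeasurable, ?_⟩
    rw [hasFiniteIntegral_iff_norm]
    have : ∀ y, ENNReal.ofReal ‖f y‖ = ENNReal.ofReal (f y) := by
      intro y; rw [Real.norm_of_nonneg (hfnn y)]
    simp_rw [this]
    exact lt_of_le_of_lt hflin ENNReal.ofReal_lt_top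
  -- Integrability of squares
  have hIsq : ∀ i j, Integrable (fun y => (w y i j) ^ 2) μ := by
    intro i j
    refine hIf.mono' ((hmeas i j).pow_const 2).aestronglyMeasurable ?_
    filter_upwards with y
    rw [Real.norm_of_nonneg (sq_nonneg _)]
    refine Finset.single_le_sum (f := fun i' => ∑ j', (w y i' j') ^ 2)
      (fun i' _ => Finset.sum_nonneg fun j' _ => sq_nonneg _) (Finset.mem_univ i) |>.trans' ?_
    exact Finset.single_le_sum (f := fun j' => (w y i j') ^ 2)
      (fun j' _ => sq_nonneg _) (Finset.mem_univ j)
  -- Integrability of w itself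
  have hIw : ∀ i j, Integrable (fun y => w y i j) μ := by
    intro i j
    refine ((integrable_const 1).add (hIsq i j)).mono' (hmeas i j).aestronglyMeasurable ?_
    filter_upwards with y
    simp only [Pi.add_apply]
    have : ‖w y i j‖ = |w y i j| := rfl
    rw [this]
    nlinarith [sq_nonneg (|w y i j| - 1), abs_nonneg (w y i j), sq_abs (w y i j)]
  set c : Fin n → Fin n → ℝ := fun i j => ⨍ z in B, w z i j with hc
  -- Integrability of deviations squared
  have hIdev : ∀ i j, Integrable (fun y => (w y i j - c i j) ^ 2) μ := by
    intro i j
    have e : (fun y => (w y i j - c i j) ^ 2)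
        = fun y => ((w y i j) ^ 2 - 2 * c i j * w y i j) + (c i j) ^ 2 := by
      funext y; ring
    rw [e]
    exact ((hIsq i j).sub ((hIw i j).const_mul _)).add (integrable_const _)
  set g : EuclideanSpace ℝ (Fin n) → ℝ := fun y => ∑ i, ∑ j, (w y i j - c i j) ^ 2 with hg
  have hIg : Integrable g μ := by
    apply integrable_finset_sum
    intro i _
    exact integrable_finset_sum _ (fun j _ => hIdev i j)
  have hgnn : ∀ y, 0 ≤ g y := fun y =>
    Finset.sum_nonneg fun i _ => Finset.sum_nonneg fun j _ => sq_nonneg _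
  -- variance inequality summed
  have hvar : ∫ y, g y ∂μ ≤ ∫ y, f y ∂μ := by
    rw [hg, hf]
    rw [integral_finset_sum _ (fun i _ => integrable_finset_sum _ (fun j _ => hIdev i j)),
        integral_finset_sum _ (fun i _ => integrable_finset_sum _ (fun j _ => hIsq i j))]
    apply Finset.sum_le_sum
    intro i _
    rw [integral_finset_sum _ (fun j _ => hIdev i j), integral_finset_sum _ (fun j _ => hIsq i j)]
    apply Finset.sum_le_sum
    intro j _
    have := variance_aux μ (fun y => w y i j) (hIw i j) (hIsq i j)
    convert this using 2
  -- now the lintegral bound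
  have hmain : ∫⁻ y in B, ENNReal.ofReal (g y) ≤ ENNReal.ofReal (C₀ ^ 2) := by
    have e1 : ∫⁻ y, ENNReal.ofReal (g y) ∂μ = ENNReal.ofReal (∫ y, g y ∂μ) :=
      (ofReal_integral_eq_lintegral_ofReal hIg (Filter.Eventually.of_forall hgnn)).symm
    have e2 : ENNReal.ofReal (∫ y, f y ∂μ) = ∫⁻ y, ENNReal.ofReal (f y) ∂μ :=
      ofReal_integral_eq_lintegral_ofReal hIf (Filter.Eventually.of_forall hfnn)
    calc ∫⁻ y, ENNReal.ofReal (g y) ∂μ = ENNReal.ofReal (∫ y, g y ∂μ) := e1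
      _ ≤ ENNReal.ofReal (∫ y, f y ∂μ) := ENNReal.ofReal_le_ofReal hvar
      _ = ∫⁻ y, ENNReal.ofReal (f y) ∂μ := e2
      _ ≤ ENNReal.ofReal (C₀ ^ 2) := hflin
  unfold meanOsc2
  exact ENNReal.div_le_div hmain le_rfl

/-- Selection lemma for the blow-up argument, phrased for the matrix-valued functions
`w k = D²u_k ∈ L²(B₁)`: if the `L²(B₁)` norms are uniformly bounded by `C₀` but
`sup_k sup_{0<r<1} ⨍_{B_r} |w k − (w k)̄_{B_r}|² = ∞`, then for every `0 < δ < 1` there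
are radii `r_m → 0` and indices `k_m` such that
`(1−δ) ⨍_{B_ρ} |w k − (w k)̄_{B_ρ}|² ≤ ⨍_{B_{r_m}} |w (k_m) − (w (k_m))̄_{B_{r_m}}|²`
for all `m`, all `k` and all `r_m ≤ ρ < 1`. -/
theorem selection_lemma (n : ℕ) (hn : 1 ≤ n) (C₀ : ℝ)
    (w : ℕ → EuclideanSpace ℝ (Fin n) → Fin n → Fin n → ℝ)
    (hmeas : ∀ k i j, Measurable (fun y => w k y i j))
    (hL2 : ∀ k, ∫⁻ y in ball (0 : EuclideanSpace ℝ (Fin n)) 1,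
        ENNReal.ofReal (∑ i, ∑ j, (w k y i j) ^ 2) ≤ ENNReal.ofReal (C₀ ^ 2))
    (hblow : (⨆ (k : ℕ) (r : ℝ) (_ : 0 < r) (_ : r < 1), meanOsc2 (w k) r) = ⊤)
    (δ : ℝ) (hδ₀ : 0 < δ) (hδ₁ : δ < 1) :
    ∃ (rs : ℕ → ℝ) (ks : ℕ → ℕ),
      (∀ m, 0 < rs m ∧ rs m < 1) ∧
      Tendsto rs atTop (nhds 0) ∧
      ∀ (m k : ℕ) (ρ : ℝ), rs m ≤ ρ → ρ < 1 →
        ENNReal.ofReal (1 - δ) * meanOsc2 (w k) ρ ≤ meanOsc2 (w (ks m)) (rs m) := by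
  classical
  set Q : ℕ → ℝ → ℝ≥0∞ := fun k ρ => meanOsc2 (w k) ρ with hQ
  set V : ℝ → ℝ≥0∞ := fun ρ => volume (ball (0 : EuclideanSpace ℝ (Fin n)) ρ) with hV
  have hVmono : ∀ {r ρ : ℝ}, r ≤ ρ → V r ≤ V ρ := fun h =>
    measure_mono (ball_subset_ball h)
  have hVpos : ∀ {r : ℝ}, 0 < r → 0 < V r := fun h => measure_ball_pos _ _ h
  have hVfin : ∀ r : ℝ, V r < ⊤ := fun r => measure_ball_lt_top
  have hQle : ∀ k ρ, 0 < ρ → ρ ≤ 1 → Q k ρ ≤ ENNReal.ofReal (C₀ ^ 2) / V ρ :=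
    fun k ρ h1 h2 => oscBound C₀ (w k) (hmeas k) (hL2 k) ρ h1 h2
  set S : ℝ → ℝ≥0∞ := fun r => ⨆ k, ⨆ ρ, ⨆ (_ : r ≤ ρ), ⨆ (_ : ρ < 1), Q k ρ with hS
  have hQleS : ∀ k ρ r, r ≤ ρ → ρ < 1 → Q k ρ ≤ S r := by
    intro k ρ r h1 h2
    rw [hS]
    refine le_trans ?_ (le_iSup _ k)
    refine le_trans ?_ (le_iSup _ ρ)
    refine le_trans ?_ (le_iSup _ h1)
    exact le_iSup (fun _ : ρ < 1 => Q k ρ) h2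
  have hSle : ∀ r, 0 < r → S r ≤ ENNReal.ofReal (C₀ ^ 2) / V r := by
    intro r hr
    rw [hS]
    refine iSup_le fun k => iSup_le fun ρ => iSup_le fun h1 => iSup_le fun h2 => ?_
    refine le_trans (hQle k ρ (lt_of_lt_of_le hr h1) h2.le) ?_
    exact ENNReal.div_le_div le_rfl (hVmono h1)
  have hSfin : ∀ r, 0 < r → S r ≠ ⊤ := by
    intro r hr
    refine ne_top_of_le_ne_top ?_ (hSle r hr)
    exact (ENNReal.div_lt_top ENNReal.ofReal_ne_top (hVpos hr).ne').ne
  set d : ℝ≥0∞ := ENNReal.ofReal (1 - δ) with hd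
  have hd0 : d ≠ 0 := by
    rw [hd]
    simp only [ne_eq, ENNReal.ofReal_eq_zero, not_le]
    linarith
  have hdt : d ≠ ⊤ := ENNReal.ofReal_ne_top
  have hd1 : d < 1 := by
    rw [hd]
    rw [← ENNReal.ofReal_one]
    exact ENNReal.ofReal_lt_ofReal_iff_of_nonneg (by linarith) |>.mpr (by linarith)
  -- main selection
  have key : ∀ m : ℕ, ∃ (r : ℝ) (k : ℕ), 0 < r ∧ r < 1 ∧
      V r ≤ 1 / ((m : ℝ≥0∞) + 1) ∧
      ∀ (k' : ℕ) (ρ : ℝ), r ≤ ρ → ρ < 1 → d * Q k' ρ ≤ Q k r := by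
    intro m
    set N : ℝ≥0∞ := ((m : ℝ≥0∞) + 1) * (ENNReal.ofReal (C₀ ^ 2) + 1) with hN
    have hN0 : N ≠ 0 := by
      rw [hN]
      exact mul_ne_zero (by simp) (by simp)
    have hNt : N ≠ ⊤ := by
      rw [hN]
      exact ENNReal.mul_ne_top (by simp [ENNReal.add_ne_top]) (by simp [ENNReal.add_ne_top])
    set b : ℝ≥0∞ := N / d with hb
    have hbt : b ≠ ⊤ := (ENNReal.div_lt_top hNt hd0).ne
    have hblt : b < ⨆ (k : ℕ) (r : ℝ) (_ : 0 < r) (_ : r < 1), meanOsc2 (w k) r := by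
      rw [hblow]; exact hbt.lt_top
    simp only [lt_iSup_iff] at hblt
    obtain ⟨k₀, r₀, hr₀, hr₀1, hbQ⟩ := hblt
    have hbS : b < S r₀ := lt_of_lt_of_le hbQ (hQleS k₀ r₀ r₀ le_rfl hr₀1)
    have hS0 : S r₀ ≠ 0 := by
      intro h
      rw [h] at hbS
      exact (not_lt_bot hbS)
    have hdS : d * S r₀ < S r₀ := by
      conv_rhs => rw [← one_mul (S r₀)]
      exact (ENNReal.mul_lt_mul_left hS0 (hSfin r₀ hr₀) hd1) |>.trans_eq (by ring) |>.trans_le le_rfl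
    have hdS' : d * S r₀ < S r₀ := hdS
    rw [hS] at hdS'
    simp only [lt_iSup_iff] at hdS'
    obtain ⟨k₁, r₁, hrr₁, hr₁1, hQ₁⟩ := hdS'
    have hr₁0 : 0 < r₁ := lt_of_lt_of_le hr₀ hrr₁
    refine ⟨r₁, k₁, hr₁0, hr₁1, ?_, ?_⟩
    · -- volume bound
      have h1 : N ≤ d * b := by
        rw [hb, ENNReal.mul_div_cancel hd0 hdt]
      have h2 : d * b ≤ d * S r₀ := mul_le_mul_right hbS.le d
      have h3 : N ≤ Q k₁ r₁ := le_trans h1 (le_trans h2 hQ₁.le)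
      have h4 : Q k₁ r₁ ≤ ENNReal.ofReal (C₀ ^ 2) / V r₁ := hQle k₁ r₁ hr₁0 hr₁1.le
      have h5 : N ≤ ENNReal.ofReal (C₀ ^ 2) / V r₁ := le_trans h3 h4
      have h6 : N * V r₁ ≤ ENNReal.ofReal (C₀ ^ 2) := by
        rw [← ENNReal.le_div_iff_mul_le (Or.inl (hVpos hr₁0).ne') (Or.inl (hVfin r₁).ne)]
        exact h5
      have h7 : V r₁ ≤ ENNReal.ofReal (C₀ ^ 2) / N := by
        rw [ENNReal.le_div_iff_mul_le (Or.inl hN0) (Or.inl hNt), mul_comm]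
        exact h6
      refine h7.trans ?_
      have e : (1 : ℝ≥0∞) / ((m : ℝ≥0∞) + 1)
          = (ENNReal.ofReal (C₀ ^ 2) + 1) * 1 / ((ENNReal.ofReal (C₀ ^ 2) + 1) * ((m : ℝ≥0∞) + 1)) := by
        rw [ENNReal.mul_div_mul_left _ _ (by simp) (by simp [ENNReal.add_ne_top])]
      rw [e]
      refine ENNReal.div_le_div ?_ ?_
      · simp
      · rw [hN]; ring_nf; exact le_refl _
    · intro k' ρ h1 h2
      have : Q k' ρ ≤ S r₀ := hQleS k' ρ r₀ (le_trans hrr₁ h1) h2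
      exact le_trans (mul_le_mul_right this d) hQ₁.le
  choose rs ks h1 h2 h3 h4 using key
  refine ⟨rs, ks, fun m => ⟨h1 m, h2 m⟩, ?_, fun m k ρ hρ1 hρ2 => h4 m k ρ hρ1 hρ2⟩
  -- Tendsto rs atTop (nhds 0)
  rw [Metric.tendsto_atTop]
  intro ε hε
  set ε' : ℝ := min ε 1 with hε'
  have hε'0 : 0 < ε' := lt_min hε one_pos
  have hVε : V ε' ≠ 0 := (measure_ball_pos _ _ hε'0).ne'
  obtain ⟨N₀, hN₀⟩ := ENNReal.exists_inv_nat_lt hVε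
  refine ⟨N₀, fun m hm => ?_⟩
  have hV1 : V (rs m) ≤ 1 / ((m : ℝ≥0∞) + 1) := h3 m
  have hcmp : (1 : ℝ≥0∞) / ((m : ℝ≥0∞) + 1) ≤ ((N₀ : ℝ≥0∞))⁻¹ := by
    rw [one_div]
    refine ENNReal.inv_le_inv.mpr ?_
    calc ((N₀ : ℝ≥0∞)) ≤ (m : ℝ≥0∞) := by exact_mod_cast Nat.cast_le.mpr hm
      _ ≤ (m : ℝ≥0∞) + 1 := le_self_add
  have hlt : V (rs m) < V ε' := lt_of_le_of_lt (hV1.trans hcmp) hN₀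
  have hrs : rs m < ε' := by
    by_contra h
    push_neg at h
    exact absurd (measure_mono (ball_subset_ball h) : V ε' ≤ V (rs m)) (not_le.mpr hlt)
  rw [Real.dist_eq, sub_zero, abs_of_pos (h1 m)]
  exact lt_of_lt_of_le hrs (min_le_left _ _)
end

section
/- Let n ≥ 1, N ≥ 1, and let p(x,t) be a real polynomial on ℝⁿ×ℝ of parabolic degree exactly N (i.e. of weighted degree N where each spatial variable x_i has weight 1 and t has weight 2). Then there exist a constant c > 0 and R₀ > 1 such that for every R ≥ R₀ and every constant a ∈ ℝ: ⨍_{Q_R} |p − a|² ≥ c R^{2N}. -/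
open MeasureTheory Metric

/-- The parabolic cube `Q_r = B_r(0) × (−r²/2, r²/2]` in `ℝⁿ × ℝ`. -/
noncomputable def pCube0 {n : ℕ} (r : ℝ) : Set (EuclideanSpace ℝ (Fin n) × ℝ) :=
  (ball (0 : EuclideanSpace ℝ (Fin n)) r) ×ˢ Set.Ioc (-(r ^ 2) / 2) (r ^ 2 / 2)

/-- Parabolic weights on the variables of `ℝⁿ × ℝ`: each spatial variable has
weight `1` and the time variable has weight `2`. -/
def parWeight (n : ℕ) : (Fin n ⊕ Unit) → ℕ :=
  Sum.elim (fun _ => 1) (fun _ => 2)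

/-- Evaluation of a polynomial in the variables `x₁, …, xₙ, t` at `z = (x, t) ∈ ℝⁿ × ℝ`. -/
noncomputable def evalPar {n : ℕ} (P : MvPolynomial (Fin n ⊕ Unit) ℝ)
    (z : EuclideanSpace ℝ (Fin n) × ℝ) : ℝ :=
  MvPolynomial.eval (Sum.elim (fun i => z.1 i) (fun _ => z.2)) P

namespace ParGrowth

open MvPolynomial

variable {n : ℕ}

/-- weighted (parabolic) degree of an exponent vector -/
def wt {n : ℕ} (d : Fin n ⊕ Unit →₀ ℕ) : ℕ :=
  (∑ i : Fin n, d (Sum.inl i)) + 2 * d (Sum.inr ())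

noncomputable def mono {n : ℕ} (d : Fin n ⊕ Unit →₀ ℕ) (z : EuclideanSpace ℝ (Fin n) × ℝ) : ℝ :=
  (∏ i : Fin n, z.1 i ^ d (Sum.inl i)) * z.2 ^ d (Sum.inr ())

lemma wt_eq_weight (d : Fin n ⊕ Unit →₀ ℕ) : (Finsupp.weight (parWeight n)) d = wt d := by
  rw [Finsupp.weight_apply,
    Finsupp.sum_fintype d (fun i c => c • parWeight n i) (fun i => by simp),
    Fintype.sum_sum_type]
  simp [parWeight, wt, mul_comm]

lemma wt_add (d e : Fin n ⊕ Unit →₀ ℕ) : wt (d + e) = wt d + wt e := by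
  simp only [wt, Finsupp.add_apply, Finset.sum_add_distrib]
  ring

lemma wt_zero : wt (0 : Fin n ⊕ Unit →₀ ℕ) = 0 := by simp [wt]

lemma evalPar_eq_sum (S : MvPolynomial (Fin n ⊕ Unit) ℝ) (z : EuclideanSpace ℝ (Fin n) × ℝ) :
    evalPar S z = ∑ d ∈ S.support, S.coeff d * mono d z := by
  rw [evalPar, eval_eq']
  refine Finset.sum_congr rfl fun d _ => ?_
  congr 1
  rw [Fintype.prod_sum_type]
  simp [mono]

lemma cont_mono (d : Fin n ⊕ Unit →₀ ℕ) : Continuous (mono (n := n) d) := by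
  apply Continuous.mul
  · apply continuous_finset_prod
    intro i _
    show Continuous fun z : EuclideanSpace ℝ (Fin n) × ℝ => z.1 i ^ d (Sum.inl i)
    exact ((EuclideanSpace.proj (𝕜 := ℝ) i).continuous.comp continuous_fst).pow _
  · exact continuous_snd.pow _

lemma cont_evalPar (S : MvPolynomial (Fin n ⊕ Unit) ℝ) : Continuous (evalPar (n := n) S) := by
  have : evalPar (n := n) S = fun z => ∑ d ∈ S.support, S.coeff d * mono d z :=
    funext (evalPar_eq_sum S)
  rw [this]
  exact continuous_finset_sum _ fun d _ => continuous_const.mul (cont_mono d)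

lemma integrableOn_pCube0 {f : EuclideanSpace ℝ (Fin n) × ℝ → ℝ} (hf : Continuous f) (R : ℝ) :
    IntegrableOn f (pCube0 (n := n) R) := by
  have hb : Bornology.IsBounded (pCube0 (n := n) R) :=
    (isBounded_ball).prod (isBounded_Ioc _ _)
  exact (hf.continuousOn.integrableOn_compact hb.isCompact_closure).mono_set subset_closure

lemma Xscale (α : Fin n → ℕ) {R : ℝ} (hR : 0 < R) :
    ∫ x in ball (0 : EuclideanSpace ℝ (Fin n)) R, ∏ i, (x i) ^ α i
    = R ^ (n + ∑ i, α i) * ∫ x in ball (0 : EuclideanSpace ℝ (Fin n)) 1, ∏ i, (x i) ^ α i := by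
  have h := Measure.setIntegral_comp_smul_of_pos (volume)
    (fun x : EuclideanSpace ℝ (Fin n) => ∏ i, (x i) ^ α i)
    (ball (0 : EuclideanSpace ℝ (Fin n)) 1) hR
  rw [smul_unitBall_of_pos hR, finrank_euclideanSpace_fin] at h
  simp only [PiLp.smul_apply, smul_eq_mul, mul_pow, Finset.prod_mul_distrib,
    Finset.prod_pow_eq_pow_sum] at h
  rw [integral_const_mul] at h
  rw [pow_add]
  have := h
  field_simp at this
  linarith [this]

lemma Tscale (j : ℕ) {R : ℝ} (hR : 0 < R) :
    ∫ t in Set.Ioc (-(R^2)/2) (R^2/2), t ^ j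
      = (R ^ 2) ^ (j+1) * ∫ t in Set.Ioc (-((1:ℝ)^2)/2) (1^2/2), t ^ j := by
  have hle : -(R^2)/2 ≤ R^2/2 := by nlinarith
  rw [← intervalIntegral.integral_of_le hle, ← intervalIntegral.integral_of_le (by norm_num),
    integral_pow, integral_pow]
  rw [show (-(R^2)/2 : ℝ) = (R^2) * (-(1:ℝ)^2/2) by ring,
    show (R^2/2 : ℝ) = (R^2) * ((1:ℝ)^2/2) by ring, mul_pow, mul_pow]
  ring

lemma integral_mono_prod (d : Fin n ⊕ Unit →₀ ℕ) (r : ℝ) :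
    ∫ z in pCube0 (n := n) r, mono d z
      = (∫ x in ball (0 : EuclideanSpace ℝ (Fin n)) r, ∏ i, (x i) ^ d (Sum.inl i))
        * ∫ t in Set.Ioc (-(r^2)/2) (r^2/2), t ^ d (Sum.inr ()) := by
  rw [pCube0, Measure.volume_eq_prod, ← setIntegral_prod_mul]
  rfl

/-- integral of a monomial over `Q_1`. -/
noncomputable def kap {n : ℕ} (d : Fin n ⊕ Unit →₀ ℕ) : ℝ :=
  ∫ z in pCube0 (n := n) 1, mono d z

lemma integral_mono {d : Fin n ⊕ Unit →₀ ℕ} {R : ℝ} (hR : 0 < R) :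
    ∫ z in pCube0 (n := n) R, mono d z = R ^ ((n + 2) + wt d) * kap d := by
  rw [integral_mono_prod, kap, integral_mono_prod, Xscale _ hR, Tscale _ hR]
  have hexp : R ^ (n + ∑ i, d (Sum.inl i)) * (R ^ 2) ^ (d (Sum.inr ()) + 1)
      = R ^ ((n + 2) + wt d) := by
    rw [← pow_mul, ← pow_add]
    congr 1
    simp only [wt]
    ring
  rw [← hexp]
  ring

lemma integral_evalPar (S : MvPolynomial (Fin n ⊕ Unit) ℝ) {R : ℝ} (hR : 0 < R) :
    ∫ z in pCube0 (n := n) R, evalPar S z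
      = ∑ d ∈ S.support, S.coeff d * (R ^ ((n + 2) + wt d) * kap d) := by
  have h1 : ∫ z in pCube0 (n := n) R, evalPar S z
      = ∫ z in pCube0 (n := n) R, ∑ d ∈ S.support, S.coeff d * mono d z := by
    apply integral_congr_ae
    filter_upwards with z using evalPar_eq_sum S z
  rw [h1, integral_finset_sum _ fun d _ =>
    (integrableOn_pCube0 (f := fun z => S.coeff d * mono d z) (continuous_const.mul (cont_mono d)) R)]
  refine Finset.sum_congr rfl fun d _ => ?_
  rw [integral_const_mul, integral_mono hR]

lemma mono_zero_eq_one (z : EuclideanSpace ℝ (Fin n) × ℝ) :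
    mono (0 : Fin n ⊕ Unit →₀ ℕ) z = 1 := by simp [mono]

lemma volume_toReal {R : ℝ} (hR : 0 < R) :
    (volume (pCube0 (n := n) R)).toReal = R ^ (n + 2) * kap (0 : Fin n ⊕ Unit →₀ ℕ) := by
  have h1 : (volume (pCube0 (n := n) R)).toReal
      = ∫ z in pCube0 (n := n) R, mono (0 : Fin n ⊕ Unit →₀ ℕ) z := by
    rw [show (∫ z in pCube0 (n := n) R, mono (0 : Fin n ⊕ Unit →₀ ℕ) z)
        = ∫ _ in pCube0 (n := n) R, (1:ℝ) from
      integral_congr_ae (by filter_upwards with z using mono_zero_eq_one z)]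
    rw [setIntegral_const, smul_eq_mul, mul_one]
    rfl
  rw [h1, integral_mono hR, wt_zero]

lemma volume_toReal_one :
    (volume (pCube0 (n := n) 1)).toReal = kap (0 : Fin n ⊕ Unit →₀ ℕ) := by
  rw [volume_toReal one_pos, one_pow, one_mul]

noncomputable def V1 (n : ℕ) : ℝ := kap (n := n) (0 : Fin n ⊕ Unit →₀ ℕ)

lemma openPos : (volume : Measure (EuclideanSpace ℝ (Fin n) × ℝ)).IsOpenPosMeasure := by
  rw [show (volume : Measure (EuclideanSpace ℝ (Fin n) × ℝ))
      = (volume : Measure (EuclideanSpace ℝ (Fin n))).prod (volume : Measure ℝ) from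
    Measure.volume_eq_prod _ _]
  infer_instance

lemma V1_pos : 0 < V1 n := by
  rw [V1, ← volume_toReal_one]
  haveI := openPos (n := n)
  apply ENNReal.toReal_pos
  · have hU : IsOpen ((ball (0 : EuclideanSpace ℝ (Fin n)) 1) ×ˢ
        Set.Ioo (-((1:ℝ)^2)/2) ((1:ℝ)^2/2)) := isOpen_ball.prod isOpen_Ioo
    have hne : ((ball (0 : EuclideanSpace ℝ (Fin n)) 1) ×ˢ
        Set.Ioo (-((1:ℝ)^2)/2) ((1:ℝ)^2/2)).Nonempty := by
      refine ⟨(0, 0), ?_, ?_⟩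
      · exact mem_ball_self one_pos
      · constructor <;> norm_num
    have hsub : ((ball (0 : EuclideanSpace ℝ (Fin n)) 1) ×ˢ
        Set.Ioo (-((1:ℝ)^2)/2) ((1:ℝ)^2/2)) ⊆ pCube0 (n := n) 1 :=
      Set.prod_mono subset_rfl Set.Ioo_subset_Ioc_self
    exact ne_of_gt (lt_of_lt_of_le (hU.measure_pos volume hne) (measure_mono hsub))
  · have hb : Bornology.IsBounded (pCube0 (n := n) 1) :=
      (isBounded_ball).prod (isBounded_Ioc _ _)
    exact ne_of_lt (lt_of_le_of_lt (measure_mono subset_closure)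
      hb.isCompact_closure.measure_lt_top)

noncomputable def Ad {n : ℕ} (d : Fin n ⊕ Unit →₀ ℕ) : ℝ := kap d / V1 n

lemma avg_evalPar (S : MvPolynomial (Fin n ⊕ Unit) ℝ) {R : ℝ} (hR : 0 < R) :
    ⨍ z in pCube0 (n := n) R, evalPar S z
      = ∑ d ∈ S.support, S.coeff d * Ad d * R ^ wt d := by
  rw [setAverage_eq, integral_evalPar S hR, measureReal_def, volume_toReal hR, smul_eq_mul, Finset.mul_sum]
  refine Finset.sum_congr rfl fun d _ => ?_
  rw [Ad, pow_add, ← V1]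
  have hV := V1_pos (n := n)
  have hRp : (0:ℝ) < R ^ (n + 2) := pow_pos hR _
  field_simp
  ring

lemma avg_abs_le (S : MvPolynomial (Fin n ⊕ Unit) ℝ) (M : ℕ)
    (h : ∀ d ∈ S.support, wt d ≤ M) {R : ℝ} (hR : 1 ≤ R) :
    |⨍ z in pCube0 (n := n) R, evalPar S z|
      ≤ (∑ d ∈ S.support, |S.coeff d * Ad d|) * R ^ M := by
  have hR0 : (0:ℝ) < R := lt_of_lt_of_le one_pos hR
  rw [avg_evalPar S hR0]
  calc |∑ d ∈ S.support, S.coeff d * Ad d * R ^ wt d|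
      ≤ ∑ d ∈ S.support, |S.coeff d * Ad d * R ^ wt d| :=
        Finset.abs_sum_le_sum_abs _ _
    _ ≤ ∑ d ∈ S.support, |S.coeff d * Ad d| * R ^ M := by
        refine Finset.sum_le_sum fun d hd => ?_
        rw [abs_mul]
        have h1 : |R ^ wt d| = R ^ wt d := abs_of_nonneg (pow_nonneg hR0.le _)
        rw [h1]
        exact mul_le_mul_of_nonneg_left (pow_le_pow_right₀ hR (h d hd)) (abs_nonneg _)
    _ = (∑ d ∈ S.support, |S.coeff d * Ad d|) * R ^ M := (Finset.sum_mul _ _ _).symm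

lemma avg_homog (S : MvPolynomial (Fin n ⊕ Unit) ℝ) (M : ℕ)
    (h : ∀ d ∈ S.support, wt d = M) {R : ℝ} (hR : 0 < R) :
    ⨍ z in pCube0 (n := n) R, evalPar S z
      = R ^ M * ⨍ z in pCube0 (n := n) 1, evalPar S z := by
  rw [avg_evalPar S hR, avg_evalPar S one_pos, Finset.mul_sum]
  refine Finset.sum_congr rfl fun d hd => ?_
  rw [h d hd, one_pow]
  ring

lemma avg_add (S T : MvPolynomial (Fin n ⊕ Unit) ℝ) {R : ℝ} (hR : 0 < R) :
    ⨍ z in pCube0 (n := n) R, evalPar (S + T) z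
      = (⨍ z in pCube0 (n := n) R, evalPar S z) + ⨍ z in pCube0 (n := n) R, evalPar T z := by
  rw [setAverage_eq, setAverage_eq, setAverage_eq, ← smul_add,
    ← integral_add (integrableOn_pCube0 (cont_evalPar S) R)
      (integrableOn_pCube0 (cont_evalPar T) R)]
  congr 1
  apply integral_congr_ae
  filter_upwards with z
  simp [evalPar]

lemma eval_line (S : MvPolynomial (Fin n ⊕ Unit) ℝ) (z : EuclideanSpace ℝ (Fin n) × ℝ)
    (s : ℝ) :
    evalPar S (s • z.1, s * z.2)
      = Polynomial.eval s (MvPolynomial.aeval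
          (fun i => Polynomial.C (Sum.elim (fun j => z.1 j) (fun _ => z.2) i) * Polynomial.X)
          S) := by
  set g : Fin n ⊕ Unit → ℝ := Sum.elim (fun j => z.1 j) (fun _ => z.2) with hg
  have h1 : Polynomial.eval s (MvPolynomial.aeval
        (fun i => Polynomial.C (g i) * Polynomial.X) S)
      = MvPolynomial.eval (fun i => g i * s) S := by
    rw [← Polynomial.coe_aeval_eq_eval,
      comp_aeval_apply (f := fun i => Polynomial.C (g i) * Polynomial.X) (Polynomial.aeval s) S]
    have : (fun i => (Polynomial.aeval s) (Polynomial.C (g i) * Polynomial.X))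
        = fun i => g i * s := by
      funext i
      simp
    rw [this, ← MvPolynomial.coe_aeval_eq_eval]
    rfl
  rw [h1, evalPar]
  have hpt : (Sum.elim (fun i => (s • z.1, s * z.2).1 i) fun _ => (s • z.1, s * z.2).2)
      = fun i => g i * s := by
    funext i
    cases i with
    | inl j => simp [g, PiLp.smul_apply, mul_comm]
    | inr u => cases u; simp [g, mul_comm]
  rw [hpt]

lemma vanish (S : MvPolynomial (Fin n ⊕ Unit) ℝ)
    (h : ∀ z ∈ (ball (0 : EuclideanSpace ℝ (Fin n)) 1) ×ˢ
        Set.Ioo (-((1:ℝ)^2)/2) ((1:ℝ)^2/2), evalPar S z = 0) : S = 0 := by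
  have hz : ∀ z : EuclideanSpace ℝ (Fin n) × ℝ, evalPar S z = 0 := by
    intro z
    set q : Polynomial ℝ := MvPolynomial.aeval
      (fun i => Polynomial.C (Sum.elim (fun j => z.1 j) (fun _ => z.2) i) * Polynomial.X) S
      with hq
    set ε : ℝ := min (1/(‖z.1‖+1)) (1/(2*|z.2|+2)) with hε
    have hεpos : 0 < ε := by
      apply lt_min
      · positivity
      · positivity
    have hroots : Set.Ioo (0:ℝ) ε ⊆ {s | q.IsRoot s} := by
      intro s hs
      obtain ⟨hs0, hsε⟩ := hs
      have hs1 : s < 1/(‖z.1‖+1) := lt_of_lt_of_le hsε (min_le_left _ _)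
      have hs2 : s < 1/(2*|z.2|+2) := lt_of_lt_of_le hsε (min_le_right _ _)
      have hn1 : (0:ℝ) < ‖z.1‖ + 1 := by positivity
      have hn2 : (0:ℝ) < 2*|z.2| + 2 := by positivity
      have hball : ‖s • z.1‖ < 1 := by
        rw [norm_smul, Real.norm_eq_abs, abs_of_pos hs0]
        rw [lt_div_iff₀ hn1] at hs1
        nlinarith [norm_nonneg z.1]
      have htt : |s * z.2| < 1/2 := by
        rw [abs_mul, abs_of_pos hs0]
        rw [lt_div_iff₀ hn2] at hs2
        nlinarith [abs_nonneg z.2]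
      have hmem : (s • z.1, s * z.2) ∈ (ball (0 : EuclideanSpace ℝ (Fin n)) 1) ×ˢ
          Set.Ioo (-((1:ℝ)^2)/2) ((1:ℝ)^2/2) := by
        refine ⟨mem_ball_zero_iff.mpr hball, ?_⟩
        have := abs_lt.mp htt
        constructor
        · norm_num
          linarith [this.1]
        · norm_num
          linarith [this.2]
      have h0 := h _ hmem
      rw [eval_line S z s] at h0
      exact h0
    have hq0 : q = 0 :=
      Polynomial.eq_zero_of_infinite_isRoot q ((Set.Ioo_infinite hεpos).mono hroots)
    have h1 := eval_line S z 1
    rw [← hq, hq0] at h1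
    simpa using h1
  apply (MvPolynomial.funext_iff (q := (0 : MvPolynomial (Fin n ⊕ Unit) ℝ))).mpr
  intro y
  have := hz ((WithLp.equiv 2 (Fin n → ℝ)).symm (fun i => y (Sum.inl i)), y (Sum.inr ()))
  rw [evalPar] at this
  rw [map_zero]
  convert this using 2
  refine congrArg _ (funext fun i => ?_)
  cases i with
  | inl j => rfl
  | inr u => cases u; rfl

lemma volume_pCube0_lt_top (R : ℝ) : volume (pCube0 (n := n) R) < ⊤ := by
  have hb : Bornology.IsBounded (pCube0 (n := n) R) :=
    (isBounded_ball).prod (isBounded_Ioc _ _)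
  exact lt_of_le_of_lt (measure_mono subset_closure) hb.isCompact_closure.measure_lt_top

lemma integral_sub_sq (F : EuclideanSpace ℝ (Fin n) × ℝ → ℝ) (hF : Continuous F)
    (R c : ℝ) :
    ∫ z in pCube0 (n := n) R, (F z - c)^2
      = (∫ z in pCube0 (n := n) R, (F z)^2) - 2*c*(∫ z in pCube0 (n := n) R, F z)
        + c^2 * (volume (pCube0 (n := n) R)).toReal := by
  have h1 : IntegrableOn (fun z => (F z)^2) (pCube0 (n := n) R) :=
    integrableOn_pCube0 (hF.pow 2) R
  have h2 : IntegrableOn (fun z => 2*c*F z) (pCube0 (n := n) R) :=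
    (integrableOn_pCube0 hF R).const_mul _
  have h3 : IntegrableOn (fun _ => c^2) (pCube0 (n := n) R) :=
    integrableOn_const (volume_pCube0_lt_top R).ne
  have e1 : ∫ z in pCube0 (n := n) R, (F z - c)^2
      = ∫ z in pCube0 (n := n) R, ((F z)^2 - 2*c*F z + c^2) := by
    apply integral_congr_ae
    filter_upwards with z
    ring
  have h12 : IntegrableOn (fun z => F z ^ 2 - 2*c*F z) (pCube0 (n := n) R) volume :=
    h1.sub h2
  rw [e1, integral_add h12 h3, integral_sub h1 h2, integral_const_mul,
    setIntegral_const, smul_eq_mul, measureReal_def]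
  ring

lemma key_pos (PN : MvPolynomial (Fin n ⊕ Unit) ℝ) (hPN : PN ≠ 0)
    (h0 : MvPolynomial.coeff 0 PN = 0) :
    0 < (⨍ z in pCube0 (n := n) 1, evalPar (PN*PN) z)
        - (⨍ z in pCube0 (n := n) 1, evalPar PN z)^2 := by
  classical
  set V : ℝ := (volume (pCube0 (n := n) 1)).toReal with hVdef
  have hV : 0 < V := by rw [hVdef, volume_toReal_one]; exact V1_pos
  set f : EuclideanSpace ℝ (Fin n) × ℝ → ℝ := evalPar PN with hfdef
  have hf : Continuous f := cont_evalPar PN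
  set I1 : ℝ := ∫ z in pCube0 (n := n) 1, f z with hI1def
  set I2 : ℝ := ∫ z in pCube0 (n := n) 1, (f z)^2 with hI2def
  set m : ℝ := I1 / V with hmdef
  set g : EuclideanSpace ℝ (Fin n) × ℝ → ℝ := fun z => (f z - m)^2 with hgdef
  have hgc : Continuous g := (hf.sub continuous_const).pow 2
  have hIg : ∫ z in pCube0 (n := n) 1, g z = I2 - 2*m*I1 + m^2 * V := by
    rw [hgdef]
    exact integral_sub_sq f hf 1 m
  -- strict positivity of ∫ g
  have hg0 : 0 ≤ ∫ z in pCube0 (n := n) 1, g z :=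
    setIntegral_nonneg (measurableSet_ball.prod measurableSet_Ioc)
      (fun z _ => sq_nonneg _)
  have hgne : ∫ z in pCube0 (n := n) 1, g z ≠ 0 := by
    intro hzero
    -- g vanishes a.e. on the open sub-box U
    set U : Set (EuclideanSpace ℝ (Fin n) × ℝ) :=
      (ball (0 : EuclideanSpace ℝ (Fin n)) 1) ×ˢ Set.Ioo (-((1:ℝ)^2)/2) ((1:ℝ)^2/2) with hUdef
    have hUopen : IsOpen U := isOpen_ball.prod isOpen_Ioo
    have hUsub : U ⊆ pCube0 (n := n) 1 := Set.prod_mono subset_rfl Set.Ioo_subset_Ioc_self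
    have hIgU : ∫ z in U, g z = 0 := by
      have hle : ∫ z in U, g z ≤ ∫ z in pCube0 (n := n) 1, g z :=
        setIntegral_mono_set (integrableOn_pCube0 hgc 1)
          (Filter.Eventually.of_forall fun z => sq_nonneg _)
          (Filter.Eventually.of_forall hUsub)
      have h0' : 0 ≤ ∫ z in U, g z :=
        setIntegral_nonneg (hUopen.measurableSet) (fun z _ => sq_nonneg _)
      linarith [hle, h0', le_of_eq hzero.symm]
    have hae : g =ᵐ[volume.restrict U] 0 := by
      rw [← integral_eq_zero_iff_of_nonneg (fun z => sq_nonneg _)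
        ((integrableOn_pCube0 hgc 1).mono_set hUsub)]
      exact hIgU
    have hmeasZ : MeasurableSet {z : EuclideanSpace ℝ (Fin n) × ℝ | g z ≠ 0} :=
      (hgc.isOpen_preimage _ isOpen_compl_singleton).measurableSet
    have hZ : volume ({z | g z ≠ 0} ∩ U) = 0 := by
      have h' : (volume.restrict U) {z : EuclideanSpace ℝ (Fin n) × ℝ | g z ≠ 0} = 0 := by
        have h'' := hae
        rw [Filter.EventuallyEq, Filter.eventually_iff, mem_ae_iff] at h''
        convert h'' using 2
        all_goals
          ext z
          simp
      rw [Measure.restrict_apply hmeasZ] at h'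
      exact h'
    haveI := openPos (n := n)
    have hZopen : IsOpen {z : EuclideanSpace ℝ (Fin n) × ℝ | g z ≠ 0} :=
      hgc.isOpen_preimage _ isOpen_compl_singleton
    have hempty : ({z | g z ≠ 0} ∩ U) = ∅ :=
      (hZopen.inter hUopen).eq_empty_of_measure_zero hZ
    have hgU : ∀ z ∈ U, g z = 0 := by
      intro z hz
      by_contra hne
      exact Set.notMem_empty z (hempty ▸ ⟨hne, hz⟩)
    -- hence PN = C m, contradiction
    have hSzero : PN - MvPolynomial.C m = 0 := by
      apply vanish
      intro z hz
      have hfz : f z = m := by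
        have := hgU z hz
        rw [hgdef] at this
        have := sq_eq_zero_iff.mp this
        linarith
      simp only [evalPar, map_sub, MvPolynomial.eval_C]
      rw [hfdef] at hfz
      rw [show (MvPolynomial.eval (Sum.elim (fun i => z.1 i) fun _ => z.2)) PN
        = evalPar PN z from rfl, hfz, sub_self]
    have hPNC : PN = MvPolynomial.C m := by
      have := sub_eq_zero.mp hSzero
      exact this
    have hm0 : m = 0 := by
      have := congrArg (MvPolynomial.coeff 0) hPNC
      rw [h0, MvPolynomial.coeff_C] at this
      simpa using this.symm
    rw [hm0, map_zero] at hPNC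
    exact hPN hPNC
  have hgpos : 0 < I2 - 2*m*I1 + m^2 * V := by
    rw [← hIg]
    cases' lt_or_eq_of_le hg0 with h h
    · exact h
    · exact absurd h.symm hgne
  -- conclude
  have hA2 : ⨍ z in pCube0 (n := n) 1, evalPar (PN*PN) z = V⁻¹ * I2 := by
    rw [setAverage_eq, smul_eq_mul, measureReal_def, ← hVdef]
    congr 1
    rw [hI2def]
    apply integral_congr_ae
    filter_upwards with z
    simp [evalPar, sq, hfdef]
  have hA1 : ⨍ z in pCube0 (n := n) 1, evalPar PN z = V⁻¹ * I1 := by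
    rw [setAverage_eq, smul_eq_mul, measureReal_def]
  rw [hA2, hA1]
  have hI1m : I1 = m * V := by rw [hmdef]; field_simp
  rw [hI1m]
  have hexp : V⁻¹ * I2 - (V⁻¹ * (m * V))^2 = V⁻¹ * (I2 - 2*m*(m*V) + m^2*V) := by
    field_simp
    ring
  rw [hexp]
  apply mul_pos (inv_pos.mpr hV)
  calc (0:ℝ) < I2 - 2*m*I1 + m^2 * V := hgpos
    _ = I2 - 2*m*(m*V) + m^2*V := by rw [hI1m]

lemma lower_bound (P : MvPolynomial (Fin n ⊕ Unit) ℝ) {R : ℝ} (hR : 0 < R) (a : ℝ) :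
    (⨍ z in pCube0 (n := n) R, evalPar (P*P) z)
        - (⨍ z in pCube0 (n := n) R, evalPar P z)^2
      ≤ ⨍ z in pCube0 (n := n) R, (evalPar P z - a)^2 := by
  set V : ℝ := (volume (pCube0 (n := n) R)).toReal with hVdef
  have hV : 0 < V := by
    rw [hVdef, volume_toReal hR]
    exact mul_pos (pow_pos hR _) (V1_pos (n := n))
  set f : EuclideanSpace ℝ (Fin n) × ℝ → ℝ := evalPar P with hfdef
  have hf : Continuous f := cont_evalPar P
  set I1 : ℝ := ∫ z in pCube0 (n := n) R, f z with hI1def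
  set I2 : ℝ := ∫ z in pCube0 (n := n) R, (f z)^2 with hI2def
  have hA2 : ⨍ z in pCube0 (n := n) R, evalPar (P*P) z = V⁻¹ * I2 := by
    rw [setAverage_eq, smul_eq_mul, measureReal_def, ← hVdef]
    congr 1
    rw [hI2def]
    apply integral_congr_ae
    filter_upwards with z
    simp [evalPar, sq, hfdef]
  have hA1 : ⨍ z in pCube0 (n := n) R, evalPar P z = V⁻¹ * I1 := by
    rw [setAverage_eq, smul_eq_mul, measureReal_def]
  have hAa : ⨍ z in pCube0 (n := n) R, (evalPar P z - a)^2
      = V⁻¹ * (I2 - 2*a*I1 + a^2*V) := by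
    rw [setAverage_eq, smul_eq_mul, measureReal_def, integral_sub_sq f hf R a, ← hVdef]
  rw [hA2, hA1, hAa]
  have hkey : V⁻¹ * (I2 - 2*a*I1 + a^2*V) - (V⁻¹ * I2 - (V⁻¹ * I1)^2)
      = (a - I1/V)^2 := by
    field_simp
    ring
  nlinarith [sq_nonneg (a - I1/V)]

lemma wt_le_of_mem_mul {S T : MvPolynomial (Fin n ⊕ Unit) ℝ} {MS MT : ℕ}
    (hS : ∀ d ∈ S.support, wt d ≤ MS) (hT : ∀ d ∈ T.support, wt d ≤ MT)
    {d : Fin n ⊕ Unit →₀ ℕ} (hd : d ∈ (S*T).support) : wt d ≤ MS + MT := by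
  classical
  have h := MvPolynomial.support_mul S T hd
  rw [Finset.mem_add] at h
  obtain ⟨a, ha, b, hb, hab⟩ := h
  have hw : wt d = wt a + wt b := by rw [← hab, wt_add]
  have h1 := hS a ha
  have h2 := hT b hb
  omega

lemma wt_eq_of_mem_mul {S T : MvPolynomial (Fin n ⊕ Unit) ℝ} {MS MT : ℕ}
    (hS : ∀ d ∈ S.support, wt d = MS) (hT : ∀ d ∈ T.support, wt d = MT)
    {d : Fin n ⊕ Unit →₀ ℕ} (hd : d ∈ (S*T).support) : wt d = MS + MT := by
  classical
  have h := MvPolynomial.support_mul S T hd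
  rw [Finset.mem_add] at h
  obtain ⟨a, ha, b, hb, hab⟩ := h
  have hw : wt d = wt a + wt b := by rw [← hab, wt_add]
  rw [hw, hS a ha, hT b hb]

end ParGrowth

open ParGrowth MvPolynomial

/-- If `p(x,t)` is a polynomial of parabolic degree exactly `N ≥ 1`, then
`⨍_{Q_R} |p − a|² ≥ c R^{2N}` for all large `R` and every constant `a`. -/
theorem polynomial_parabolic_growth (n : ℕ) (hn : 1 ≤ n) (N : ℕ) (hN : 1 ≤ N)
    (P : MvPolynomial (Fin n ⊕ Unit) ℝ) (hP : P ≠ 0)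
    (hdeg : P.weightedTotalDegree (parWeight n) = N) :
    ∃ c : ℝ, 0 < c ∧ ∃ R₀ : ℝ, 1 < R₀ ∧
      ∀ R : ℝ, R₀ ≤ R → ∀ a : ℝ,
        c * R ^ (2 * N) ≤ ⨍ z in pCube0 (n := n) R, (evalPar P z - a) ^ 2 := by
  classical
  set w : (Fin n ⊕ Unit) → ℕ := parWeight n with hw
  set PN : MvPolynomial (Fin n ⊕ Unit) ℝ := weightedHomogeneousComponent w N P with hPNdef
  set Q : MvPolynomial (Fin n ⊕ Unit) ℝ := P - PN with hQdef
  have hPQ : P = PN + Q := by rw [hQdef]; ring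
  -- support weight facts
  have hsupP : ∀ d ∈ P.support, wt d ≤ N := by
    intro d hd
    have h := le_weightedTotalDegree w hd
    rw [hdeg] at h
    rw [← wt_eq_weight d]
    exact h
  have hsupPN : ∀ d ∈ PN.support, wt d = N := by
    intro d hd
    have h := MvPolynomial.mem_support_iff.mp hd
    rw [hPNdef, coeff_weightedHomogeneousComponent] at h
    by_cases hcond : (Finsupp.weight w) d = N
    · rw [← wt_eq_weight d]; exact hcond
    · rw [if_neg hcond] at h; exact absurd rfl h
  have hsupQ : ∀ d ∈ Q.support, wt d + 1 ≤ N := by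
    intro d hd
    have h := MvPolynomial.mem_support_iff.mp hd
    rw [hQdef, MvPolynomial.coeff_sub, hPNdef, coeff_weightedHomogeneousComponent] at h
    by_cases hcond : (Finsupp.weight w) d = N
    · rw [if_pos hcond, sub_self] at h; exact absurd rfl h
    · rw [if_neg hcond, sub_zero] at h
      have h1 : wt d ≤ N := hsupP d (MvPolynomial.mem_support_iff.mpr h)
      have h2 : wt d ≠ N := by
        rw [hw, wt_eq_weight d] at hcond; exact hcond
      omega
  -- top coefficient exists
  have hPsupne : P.support.Nonempty := MvPolynomial.support_nonempty.mpr hP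
  obtain ⟨d₀, hd₀mem, hd₀⟩ := Finset.exists_mem_eq_sup P.support hPsupne
    (fun d => (Finsupp.weight w) d)
  have hwd₀ : (Finsupp.weight w) d₀ = N := by
    rw [← hdeg]
    exact hd₀.symm
  have hPN0 : MvPolynomial.coeff d₀ PN = MvPolynomial.coeff d₀ P := by
    rw [hPNdef, coeff_weightedHomogeneousComponent, if_pos hwd₀]
  have hPNne : PN ≠ 0 := by
    intro h
    rw [h, MvPolynomial.coeff_zero] at hPN0
    exact (MvPolynomial.mem_support_iff.mp hd₀mem) hPN0.symm
  have hPNc0 : MvPolynomial.coeff 0 PN = 0 := by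
    rw [hPNdef, coeff_weightedHomogeneousComponent, if_neg]
    simp only [map_zero]
    omega
  -- main constants
  set H : ℝ := ⨍ z in pCube0 (n := n) 1, evalPar (PN*PN) z with hHdef
  set m1 : ℝ := ⨍ z in pCube0 (n := n) 1, evalPar PN z with hm1def
  have hh1 : 0 < H - m1^2 := key_pos PN hPNne hPNc0
  set E : MvPolynomial (Fin n ⊕ Unit) ℝ := PN*Q + Q*PN + Q*Q with hEdef
  have hPP : P*P = PN*PN + E := by rw [hPQ, hEdef]; ring
  set M₁ : ℕ := 2*N - 1 with hM₁
  set M₂ : ℕ := N - 1 with hM₂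
  have hsupQ' : ∀ d ∈ Q.support, wt d ≤ M₂ := fun d hd => by
    have := hsupQ d hd; omega
  have hsupE : ∀ d ∈ E.support, wt d ≤ M₁ := by
    intro d hd
    rw [hEdef] at hd
    have h1 := MvPolynomial.support_add hd
    rcases Finset.mem_union.mp h1 with h2 | h2
    · rcases Finset.mem_union.mp (MvPolynomial.support_add h2) with h3 | h3
      · have := wt_le_of_mem_mul (fun d hd => le_of_eq (hsupPN d hd)) hsupQ' h3
        omega
      · have := wt_le_of_mem_mul hsupQ' (fun d hd => le_of_eq (hsupPN d hd)) h3
        omega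
    · have := wt_le_of_mem_mul hsupQ' hsupQ' h2
      omega
  have hsupPNPN : ∀ d ∈ (PN*PN).support, wt d = 2*N := by
    intro d hd
    have := wt_eq_of_mem_mul hsupPN hsupPN hd
    omega
  set C1 : ℝ := ∑ d ∈ E.support, |E.coeff d * Ad d| with hC1def
  set C2 : ℝ := ∑ d ∈ Q.support, |Q.coeff d * Ad d| with hC2def
  have hC1 : 0 ≤ C1 := Finset.sum_nonneg fun d _ => abs_nonneg _
  have hC2 : 0 ≤ C2 := Finset.sum_nonneg fun d _ => abs_nonneg _
  set K : ℝ := C1 + 2 * |m1| * C2 + C2^2 with hKdef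
  have hK : 0 ≤ K := by positivity
  refine ⟨(H - m1^2)/2, by linarith, max 2 (2*K/(H - m1^2)), ?_, ?_⟩
  · exact lt_of_lt_of_le one_lt_two (le_max_left _ _)
  intro R hR a
  have hR2 : (2:ℝ) ≤ R := le_trans (le_max_left _ _) hR
  have hR1 : (1:ℝ) ≤ R := by linarith
  have hR0 : (0:ℝ) < R := by linarith
  have hRK : 2*K/(H - m1^2) ≤ R := le_trans (le_max_right _ _) hR
  -- decompositions
  have hA2 : ⨍ z in pCube0 (n := n) R, evalPar (P*P) z
      = R^(2*N) * H + ⨍ z in pCube0 (n := n) R, evalPar E z := by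
    conv_lhs => rw [hPP]
    rw [avg_add _ _ hR0, avg_homog (PN*PN) (2*N) hsupPNPN hR0, ← hHdef]
  have hAP : ⨍ z in pCube0 (n := n) R, evalPar P z
      = R^N * m1 + ⨍ z in pCube0 (n := n) R, evalPar Q z := by
    conv_lhs => rw [hPQ]
    rw [avg_add _ _ hR0, avg_homog PN N hsupPN hR0, ← hm1def]
  set e1 : ℝ := ⨍ z in pCube0 (n := n) R, evalPar E z with he1def
  set e2 : ℝ := ⨍ z in pCube0 (n := n) R, evalPar Q z with he2def
  have he1 : |e1| ≤ C1 * R^M₁ := avg_abs_le E M₁ hsupE hR1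
  have he2 : |e2| ≤ C2 * R^M₂ := avg_abs_le Q M₂ hsupQ' hR1
  -- power identities
  have h2N : R^(2*N) = R * R^M₁ := by
    rw [show 2*N = M₁ + 1 by omega, pow_succ]
    ring
  have hNM : R^N * R^M₂ = R^M₁ := by
    rw [← pow_add]
    congr 1
    omega
  have hNN : (R^N)^2 = R^(2*N) := by
    rw [← pow_mul]
    congr 1
    omega
  have hM22 : R^(M₂*2) ≤ R^M₁ := pow_le_pow_right₀ hR1 (by omega)
  -- error bounds
  have hb1 : -(C1 * R^M₁) ≤ e1 := (abs_le.mp he1).1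
  have hcross : 2*R^N*m1*e2 ≤ 2 * |m1| * C2*R^M₁ := by
    calc 2*R^N*m1*e2 ≤ |2*R^N*m1*e2| := le_abs_self _
      _ = 2*R^N* |m1| * |e2| := by
          rw [abs_mul, abs_mul, abs_mul, abs_two, abs_of_nonneg (pow_nonneg hR0.le N)]
      _ ≤ 2*R^N* |m1| * (C2*R^M₂) := by
          apply mul_le_mul_of_nonneg_left he2 (by positivity)
      _ = 2 * |m1| * C2*(R^N*R^M₂) := by ring
      _ = 2 * |m1| * C2*R^M₁ := by rw [hNM]
  have he2sq : e2^2 ≤ C2^2 * R^M₁ := by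
    have h1 : e2^2 = |e2|^2 := (sq_abs e2).symm
    have h2 : |e2|^2 ≤ (C2*R^M₂)^2 := pow_le_pow_left₀ (abs_nonneg _) he2 2
    have h3 : (C2*R^M₂)^2 = C2^2 * R^(M₂*2) := by
      rw [mul_pow, pow_mul]
    have h4 : C2^2 * R^(M₂*2) ≤ C2^2 * R^M₁ :=
      mul_le_mul_of_nonneg_left hM22 (sq_nonneg _)
    linarith
  -- final assembly
  have hKR : K * R^M₁ ≤ (H - m1^2)/2 * R^(2*N) := by
    have h2K : 2*K ≤ (H - m1^2) * R := by
      rw [div_le_iff₀ hh1] at hRK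
      linarith
    have hKle : K ≤ (H - m1^2)/2 * R := by linarith
    calc K * R^M₁ ≤ ((H - m1^2)/2 * R) * R^M₁ :=
          mul_le_mul_of_nonneg_right hKle (pow_nonneg hR0.le _)
      _ = (H - m1^2)/2 * R^(2*N) := by rw [h2N]; ring
  have hlow := lower_bound P hR0 a
  have hsqEq : (R^N*m1 + e2)^2 = R^(2*N)*m1^2 + 2*R^N*m1*e2 + e2^2 := by
    rw [← hNN]
    ring
  rw [hA2, hAP] at hlow
  rw [hsqEq] at hlow
  linarith
end
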